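/- Let $N$ be a countable elementary submodel of a structure $(H(\chi); \in)$ containing a function $f : \omega_1 \to \omega_1$ such that for every nonzero $\beta < \omega_2$ in $N$ there is a club $C \in N$ of $\omega_1$ with $\mathrm{ot}(e_\beta''\nu) < f(\nu)$ for all $\nu \in C$ (where $e_\beta : \omega_1 \to \beta$ is a fixed surjection in $N$). Then $\mathrm{ot}(N \cap \omega_2) \leq f(\delta_N)$, where $\delta_N = N \cap \omega_1$. In particular, $\mathrm{ot}(N \cap \beta) = \mathrm{ot}(e_\beta''\delta_N) < f(\delta_N)$ for every nonzero $\beta \in N \cap \omega_2$. -/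

import Mathlib

noncomputable section

universe u

open Cardinal

/-- The first uncountable ordinal. -/
def omega1 : Ordinal := (aleph 1).ord

/-- The second uncountable ordinal. -/
def omega2 : Ordinal := (aleph 2).ord

/-- The order type of a set of ordinals: the unique ordinal `o` such that `A` is the image
of `Iio o` under a strictly monotone map (with junk value if no such `o` exists). -/
def OT (A : Set Ordinal.{u}) : Ordinal.{u} :=
  sInf {o : Ordinal.{u} | ∃ g : Ordinal.{u} → Ordinal.{u},
    StrictMonoOn g (Set.Iio o) ∧ g '' Set.Iio o = A}

/-- `C` is a club (closed and unbounded) subset of `κ`: all of its members are `< κ`, it is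
unbounded in `κ`, and it contains the supremum of each of its nonempty subsets bounded in `κ`. -/
def IsClubIn (C : Set Ordinal) (κ : Ordinal) : Prop :=
  (∀ x ∈ C, x < κ) ∧ (∀ α < κ, ∃ β ∈ C, α < β) ∧
  (∀ S : Set Ordinal, S ⊆ C → S.Nonempty → sSup S < κ → sSup S ∈ C)

/-- `S` is a stationary subset of `κ`: it meets every club of `κ`. -/
def IsStationaryIn (S : Set Ordinal) (κ : Ordinal) : Prop :=
  (∀ x ∈ S, x < κ) ∧ ∀ C, IsClubIn C κ → (S ∩ C).Nonempty

namespace OTAux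

/-- The order type of a set of ordinals, computed in the higher universe. -/
noncomputable def otL (A : Set Ordinal.{u}) : Ordinal.{u + 1} :=
  Ordinal.type ((· < ·) : A → A → Prop)

lemma otL_Iio (o : Ordinal.{u}) : otL (Set.Iio o) = Ordinal.lift.{u + 1} o := by
  have h := @RelIso.ordinal_lift_type_eq _ _ _ _ isWellOrder_lt isWellOrder_lt
    (Ordinal.ToType.mk (o := o)).toRelIsoLT
  rw [Ordinal.type_toType] at h
  rw [otL, ← h, Ordinal.lift_id'.{u, u + 1}]

lemma lift_le_otL {o : Ordinal.{u}} {B : Set Ordinal.{u}} (g : Ordinal.{u} → Ordinal.{u})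
    (hg : StrictMonoOn g (Set.Iio o)) (him : g '' Set.Iio o ⊆ B) :
    Ordinal.lift.{u + 1} o ≤ otL B := by
  rw [← otL_Iio o]
  exact Ordinal.type_le_iff'.2 ⟨(OrderEmbedding.ofStrictMono
    (fun x : Set.Iio o => (⟨g x, him ⟨x, x.2, rfl⟩⟩ : B))
    (fun x y hxy => Subtype.mk_lt_mk.2 (hg x.2 y.2 hxy))).ltEmbedding⟩

lemma otL_le_lift {A : Set Ordinal.{u}} {b : Ordinal.{u}} (hA : A ⊆ Set.Iio b) :
    otL A ≤ Ordinal.lift.{u + 1} b := by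
  rw [← otL_Iio b]
  exact Ordinal.type_le_iff'.2 ⟨(OrderEmbedding.ofStrictMono
    (fun x : A => (⟨(x : Ordinal.{u}), hA x.2⟩ : Set.Iio b))
    (fun x y hxy => Subtype.mk_lt_mk.2 (Subtype.coe_lt_coe.2 hxy))).ltEmbedding⟩

lemma mem_of_lift_eq {A : Set Ordinal.{u}} {o : Ordinal.{u}}
    (ho : Ordinal.lift.{u + 1} o = otL A) :
    ∃ g : Ordinal.{u} → Ordinal.{u},
      StrictMonoOn g (Set.Iio o) ∧ g '' Set.Iio o = A := by
  have htype : otL (Set.Iio o) = otL A := by rw [otL_Iio o]; exact ho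
  obtain ⟨G⟩ := Ordinal.type_eq.1 htype
  set G' : Set.Iio o ≃o A := OrderIso.ofRelIsoLT G with hG'
  refine ⟨fun x => if hx : x < o then (G' ⟨x, hx⟩ : Ordinal.{u}) else 0, ?_, ?_⟩
  · intro x hx y hy hxy
    have hx' : x < o := hx
    have hy' : y < o := hy
    simp only [dif_pos hx', dif_pos hy']
    exact Subtype.coe_lt_coe.2 (G'.strictMono (Subtype.mk_lt_mk.2 hxy))
  · ext a
    simp only [Set.mem_image, Set.mem_Iio]
    constructor
    · rintro ⟨x, hx, rfl⟩
      simp only [dif_pos hx]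
      exact (G' ⟨x, hx⟩).2
    · intro ha
      obtain ⟨x, hx⟩ := G'.surjective ⟨a, ha⟩
      have hx2 : (x : Ordinal.{u}) < o := x.2
      refine ⟨x, hx2, ?_⟩
      simp only [dif_pos hx2, Subtype.coe_eta, hx]

lemma lift_eq_of_mem {A : Set Ordinal.{u}} {o : Ordinal.{u}}
    (g : Ordinal.{u} → Ordinal.{u}) (hg : StrictMonoOn g (Set.Iio o))
    (him : g '' Set.Iio o = A) : Ordinal.lift.{u + 1} o = otL A := by
  set G : Set.Iio o → A := fun x => ⟨g x, him ▸ ⟨x, x.2, rfl⟩⟩ with hG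
  have hmono : StrictMono G := fun x y hxy => Subtype.mk_lt_mk.2 (hg x.2 y.2 hxy)
  have hsurj : Function.Surjective G := by
    rintro ⟨a, ha⟩
    have ha' : a ∈ g '' Set.Iio o := him.symm ▸ ha
    obtain ⟨x, hx, hxa⟩ := ha'
    exact ⟨⟨x, hx⟩, Subtype.ext hxa⟩
  have h := (StrictMono.orderIsoOfSurjective G hmono hsurj).toRelIsoLT.ordinal_type_eq
  rw [← otL_Iio o]
  exact h

lemma lift_OT {A : Set Ordinal.{u}} {b : Ordinal.{u}} (hA : A ⊆ Set.Iio b) :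
    Ordinal.lift.{u + 1} (OT A) = otL A := by
  obtain ⟨o, ho⟩ := Ordinal.mem_range_lift_of_le (otL_le_lift hA)
  have hset : {o' : Ordinal.{u} | ∃ g : Ordinal.{u} → Ordinal.{u},
      StrictMonoOn g (Set.Iio o') ∧ g '' Set.Iio o' = A} = {o} := by
    ext o'
    simp only [Set.mem_setOf_eq, Set.mem_singleton_iff]
    constructor
    · rintro ⟨g, hg, him⟩
      exact Ordinal.lift_inj.1 ((lift_eq_of_mem g hg him).trans ho.symm)
    · rintro rfl; exact mem_of_lift_eq ho
  rw [OT, hset, csInf_singleton]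
  exact ho

end OTAux

/-- If `N` is a countable elementary submodel of `(H(χ); ∈)` containing `f : ω₁ → ω₁` such
that for every nonzero `β ∈ N ∩ ω₂` there is a club `C ∈ N` of `ω₁` (so in particular
`δ_N ∈ C`) with `ot(e_β '' ν) < f ν` for all `ν ∈ C`, then `ot(N ∩ ω₂) ≤ f(δ_N)`; in
particular `ot(N ∩ β) = ot(e_β '' δ_N) < f(δ_N)` for every nonzero `β ∈ N ∩ ω₂`.
`N` is represented by its set of ordinals; the hypotheses record the standard facts about
countable elementary submodels: `N ∩ ω₁ = δ_N`, `N ∩ ω₂` has no largest element, and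
`N ∩ β = e_β '' δ_N` for the surjections `e_β : ω₁ → β` belonging to `N`. -/
theorem stmt15
    (e : Ordinal → Ordinal → Ordinal) (f : Ordinal → Ordinal)
    (N : Set Ordinal) (hcount : N.Countable)
    (δ : Ordinal) (hδ : δ < omega1)
    (hheight : N ∩ Set.Iio omega1 = Set.Iio δ)
    (hnomax : ∀ β ∈ N ∩ Set.Iio omega2, ∃ γ ∈ N ∩ Set.Iio omega2, β < γ)
    (htrace : ∀ β ∈ N, 0 < β → β < omega2 → N ∩ Set.Iio β = e β '' Set.Iio δ)
    (hclub : ∀ β ∈ N, 0 < β → β < omega2 →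
      ∃ C, IsClubIn C omega1 ∧ δ ∈ C ∧ ∀ ν ∈ C, OT (e β '' Set.Iio ν) < f ν) :
    OT (N ∩ Set.Iio omega2) ≤ f δ ∧
      ∀ β ∈ N, 0 < β → β < omega2 →
        OT (N ∩ Set.Iio β) = OT (e β '' Set.Iio δ) ∧ OT (e β '' Set.Iio δ) < f δ := by
  have part2 : ∀ β ∈ N, 0 < β → β < omega2 →
      OT (N ∩ Set.Iio β) = OT (e β '' Set.Iio δ) ∧ OT (e β '' Set.Iio δ) < f δ := by
    intro β hβ h0 h2
    obtain ⟨C, hC, hδC, hf⟩ := hclub β hβ h0 h2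
    exact ⟨congrArg OT (htrace β hβ h0 h2), hf δ hδC⟩
  refine ⟨?_, part2⟩
  by_contra hcon
  push_neg at hcon
  set A := N ∩ Set.Iio omega2 with hA
  have hAsub : A ⊆ Set.Iio omega2 := Set.inter_subset_right
  have hOT : Ordinal.lift (OT A) = OTAux.otL A := OTAux.lift_OT hAsub
  obtain ⟨g, hg, him⟩ := OTAux.mem_of_lift_eq hOT
  have hfδ : f δ ∈ Set.Iio (OT A) := hcon
  have haA : g (f δ) ∈ A := him ▸ ⟨f δ, hfδ, rfl⟩
  obtain ⟨γ, hγA, haγ⟩ := hnomax (g (f δ)) haA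
  have hγN : γ ∈ N := hγA.1
  have hγ2 : γ < omega2 := hγA.2
  have hγ0 : 0 < γ := lt_of_le_of_lt zero_le haγ
  have hγlt : OT (N ∩ Set.Iio γ) < f δ := by
    rw [(part2 γ hγN hγ0 hγ2).1]; exact (part2 γ hγN hγ0 hγ2).2
  have hsucc : f δ < f δ + 1 := by
    rw [Ordinal.add_one_eq_succ]; exact Order.lt_succ _
  have hsub : Set.Iio (f δ + 1) ⊆ Set.Iio (OT A) := by
    intro x hx
    have hxle : x ≤ f δ := by
      have hx' : x < f δ + 1 := hx
      rw [Ordinal.add_one_eq_succ, Order.lt_succ_iff] at hx'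
      exact hx'
    exact lt_of_le_of_lt hxle hfδ
  have hg' : StrictMonoOn g (Set.Iio (f δ + 1)) := hg.mono hsub
  have him' : g '' Set.Iio (f δ + 1) ⊆ N ∩ Set.Iio γ := by
    rintro _ ⟨x, hx, rfl⟩
    have hxle : x ≤ f δ := by
      have hx' : x < f δ + 1 := hx
      rw [Ordinal.add_one_eq_succ, Order.lt_succ_iff] at hx'
      exact hx'
    have hgx : g x ∈ A := him ▸ ⟨x, hsub hx, rfl⟩
    refine ⟨hgx.1, ?_⟩
    rcases eq_or_lt_of_le hxle with rfl | hlt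
    · exact haγ
    · exact lt_trans (hg (hsub hx) hfδ hlt) haγ
  have hkey : Ordinal.lift (f δ + 1) ≤ OTAux.otL (N ∩ Set.Iio γ) :=
    OTAux.lift_le_otL g hg' him'
  have hNγ : Ordinal.lift (OT (N ∩ Set.Iio γ)) = OTAux.otL (N ∩ Set.Iio γ) :=
    OTAux.lift_OT (Set.inter_subset_right)
  rw [← hNγ, Ordinal.lift_le] at hkey
  exact absurd (hsucc.trans (lt_of_le_of_lt hkey hγlt)) (lt_irrefl _)
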